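/- arXiv:1704.08135 — 2 statements merged into one kernel-verified Lean document; each statement's English description precedes it below -/
import Mathlib

section
/- Let T be a power bounded operator on a Hilbert space H with constant C (‖Tⁿ‖ ≤ C for n ≥ 0). Then for every 1 < r < 2 and every x ∈ H, the integral over the circle |λ| = r of ‖(T - λ)^{-1} x‖² |dλ| is at most C' ‖x‖²/(r - 1), where C' depends only on C. -/
set_option maxHeartbeats 1000000

open Real Filter Topology

section Geom
variable {A : Type*} [NormedRing A] [CompleteSpace A]

theorem my_geom_mul (x : A) (h : Summable fun n : ℕ ↦ ‖x ^ n‖) :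
    (1 - x) * (∑' n : ℕ, x ^ n) = 1 ∧ (∑' n : ℕ, x ^ n) * (1 - x) = 1 := by
  have hs : Summable fun n : ℕ ↦ x ^ n := Summable.of_norm h
  have hx0 : Tendsto (fun n : ℕ ↦ x ^ n) atTop (𝓝 0) := hs.tendsto_atTop_zero
  have hlim : Tendsto (fun n : ℕ ↦ 1 - x ^ n) atTop (𝓝 1) := by
    simpa using tendsto_const_nhds.sub hx0
  constructor
  · have := (hs.hasSum.mul_left (1 - x)).tendsto_sum_nat
    refine tendsto_nhds_unique this ?_
    convert ← hlim
    rw [← mul_neg_geom_sum, Finset.mul_sum]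
  · have := (hs.hasSum.mul_right (1 - x)).tendsto_sum_nat
    refine tendsto_nhds_unique this ?_
    convert ← hlim
    rw [← geom_sum_mul_neg, Finset.sum_mul]

theorem my_inverse_one_sub (x : A) (h : Summable fun n : ℕ ↦ ‖x ^ n‖) :
    Ring.inverse (1 - x) = ∑' n : ℕ, x ^ n := by
  obtain ⟨h1, h2⟩ := my_geom_mul x h
  let u : Aˣ := ⟨1 - x, ∑' n : ℕ, x ^ n, h1, h2⟩
  exact Ring.inverse_unit u

end Geom

section Resolvent
variable {H : Type*} [NormedAddCommGroup H] [NormedSpace ℂ H] [CompleteSpace H]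

theorem my_inverse_sub_smul_one (T : H →L[ℂ] H) {c : ℂ} (hc : c ≠ 0)
    (h : Summable fun n : ℕ ↦ ‖(c⁻¹ • T) ^ n‖) :
    Ring.inverse (T - c • (1 : H →L[ℂ] H)) = (-c)⁻¹ • ∑' n : ℕ, (c⁻¹ • T) ^ n := by
  obtain ⟨h1, h2⟩ := my_geom_mul _ h
  have key : T - c • (1 : H →L[ℂ] H) = (-c) • (1 - c⁻¹ • T) := by
    rw [smul_sub, smul_smul, neg_mul, mul_inv_cancel₀ hc, neg_smul, neg_smul, one_smul,
      sub_neg_eq_add, neg_add_eq_sub]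
  let u : (H →L[ℂ] H)ˣ :=
    ⟨T - c • 1, (-c)⁻¹ • ∑' n : ℕ, (c⁻¹ • T) ^ n, by
      rw [key, smul_mul_smul_comm, mul_inv_cancel₀ (neg_ne_zero.mpr hc), h1, one_smul], by
      rw [key, smul_mul_smul_comm, inv_mul_cancel₀ (neg_ne_zero.mpr hc), h2, one_smul]⟩
  exact Ring.inverse_unit u

theorem my_hasSum_inverse_apply (T : H →L[ℂ] H) {c : ℂ} (hc : c ≠ 0)
    (h : Summable fun n : ℕ ↦ ‖(c⁻¹ • T) ^ n‖) (x : H) :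
    HasSum (fun n : ℕ ↦ (-(c⁻¹ ^ (n + 1))) • ((T ^ n) x))
      (Ring.inverse (T - c • (1 : H →L[ℂ] H)) x) := by
  rw [my_inverse_sub_smul_one T hc h]
  have hs : HasSum (fun n : ℕ ↦ ((c⁻¹ • T) ^ n) x) ((∑' n : ℕ, (c⁻¹ • T) ^ n) x) :=
    (Summable.of_norm h).hasSum.mapL (ContinuousLinearMap.apply ℂ H x)
  have h2 := hs.const_smul ((-c)⁻¹)
  have hfun : (fun n : ℕ ↦ (-(c⁻¹ ^ (n + 1))) • ((T ^ n) x))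
      = fun n : ℕ ↦ (-c)⁻¹ • ((c⁻¹ • T) ^ n) x := by
    funext n
    rw [smul_pow, ContinuousLinearMap.smul_apply, smul_smul]
    congr 1
    rw [inv_neg, pow_succ]
    ring
  rw [hfun, ContinuousLinearMap.smul_apply]
  exact h2

end Resolvent

open intervalIntegral in
theorem my_int_exp (k : ℤ) :
    (∫ θ in (0:ℝ)..(2*π), Complex.exp ((k:ℂ) * θ * Complex.I))
      = if k = 0 then (2*π:ℂ) else 0 := by
  rcases eq_or_ne k 0 with h | h
  · simp [h, two_mul]
  · rw [if_neg h]
    have hc : (k:ℂ) * Complex.I ≠ 0 :=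
      mul_ne_zero (Int.cast_ne_zero.mpr h) Complex.I_ne_zero
    have hrw : ∀ θ : ℝ, (k:ℂ) * θ * Complex.I = ((k:ℂ) * Complex.I) * θ := by
      intro θ; ring
    simp_rw [hrw]
    rw [integral_exp_mul_complex hc]
    have h1 : (k:ℂ) * Complex.I * ((2*π:ℝ):ℂ) = (k:ℂ) * (2 * π * Complex.I) := by
      push_cast; ring
    rw [h1, Complex.exp_int_mul_two_pi_mul_I]
    simp

theorem my_coeff (r : ℝ) (θ : ℝ) (n m : ℕ) :
    (starRingEnd ℂ) (-((circleMap 0 r θ)⁻¹ ^ (n+1))) * (-((circleMap 0 r θ)⁻¹ ^ (m+1)))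
      = ((r:ℂ)⁻¹) ^ (n+m+2) *
        Complex.exp (((((n:ℤ) - (m:ℤ)):ℤ):ℂ) * θ * Complex.I) := by
  have hl : circleMap 0 r θ = (r:ℂ) * Complex.exp (θ * Complex.I) := by
    simp [circleMap]
  have h1 : (circleMap 0 r θ)⁻¹ = (r:ℂ)⁻¹ * Complex.exp (-(θ * Complex.I)) := by
    rw [hl, mul_inv, Complex.exp_neg]
  have h2 : (starRingEnd ℂ) ((circleMap 0 r θ)⁻¹)
      = (r:ℂ)⁻¹ * Complex.exp (θ * Complex.I) := by
    rw [h1, map_mul, ← Complex.exp_conj]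
    simp [Complex.conj_ofReal]
  rw [map_neg, map_pow, neg_mul_neg, h2, h1, mul_pow, mul_pow,
    ← Complex.exp_nat_mul, ← Complex.exp_nat_mul]
  rw [show (r:ℂ)⁻¹ ^ (n+1) * Complex.exp ((n+1 : ℕ) * (θ * Complex.I)) *
      ((r:ℂ)⁻¹ ^ (m+1) * Complex.exp ((m+1 : ℕ) * (-(θ * Complex.I))))
      = (r:ℂ)⁻¹ ^ (n+m+2) * (Complex.exp ((n+1 : ℕ) * (θ * Complex.I)) *
        Complex.exp ((m+1 : ℕ) * (-(θ * Complex.I)))) by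
    rw [show n+m+2 = (n+1)+(m+1) by ring, pow_add]; ring]
  rw [← Complex.exp_add]
  congr 1
  push_cast
  ring


theorem my_geom_sum_le (s : ℝ) (h0 : 0 ≤ s) (h1 : s < 1) (N : ℕ) :
    (∑ n ∈ Finset.range N, s^(n+1)) ≤ s/(1-s) := by
  have he : (fun n : ℕ => s^(n+1)) = fun n => s * s^n := by
    funext n; rw [pow_succ']
  have hsummable : Summable fun n : ℕ => s^(n+1) := by
    rw [he]; exact (summable_geometric_of_lt_one h0 h1).mul_left s
  have h2 : (∑' n : ℕ, s^(n+1)) = s/(1-s) := by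
    rw [he, tsum_mul_left, tsum_geometric_of_lt_one h0 h1, div_eq_mul_inv]
  have h3 := Summable.sum_le_tsum (Finset.range N) (fun n _ => by positivity) hsummable
  simp only [h2] at h3
  exact h3

theorem my_inv_div (r : ℝ) (hr : 1 < r) : r⁻¹/(1-r⁻¹) = (r-1)⁻¹ := by
  have h0 : r ≠ 0 := by intro h; rw [h] at hr; linarith
  have h1 : r - 1 ≠ 0 := by intro h; rw [sub_eq_zero] at h; rw [h] at hr; linarith
  have h2 : 1 - r⁻¹ ≠ 0 := by
    have : r⁻¹ < 1 := inv_lt_one_of_one_lt₀ hr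
    intro h; rw [sub_eq_zero] at h; rw [← h] at this; exact lt_irrefl _ this
  field_simp

open Finset intervalIntegral in
theorem my_parseval {H : Type*} [NormedAddCommGroup H] [InnerProductSpace ℂ H]
    (r : ℝ) (hr : 1 < r) (v : ℕ → H) (N : ℕ) :
    (∫ θ in (0:ℝ)..(2*π),
        ‖∑ n ∈ range N, (-((circleMap 0 r θ)⁻¹ ^ (n+1))) • v n‖ ^ 2)
      = 2*π * ∑ n ∈ range N, (r⁻¹ ^ (n+1))^2 * ‖v n‖^2 := by
  have hr0 : r ≠ 0 := ne_of_gt (lt_trans one_pos hr)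
  set c : ℕ → ℝ → ℂ := fun n θ => -((circleMap 0 r θ)⁻¹ ^ (n+1)) with hc
  have hccont : ∀ n, Continuous (c n) := by
    intro n
    exact (((continuous_circleMap 0 r).inv₀
      (fun θ => circleMap_ne_center hr0)).pow _).neg
  set E : ℝ → ℂ := fun θ => ∑ n ∈ range N, ∑ m ∈ range N,
      (starRingEnd ℂ (c n θ) * c m θ) * (inner ℂ (v n) (v m) : ℂ) with hE
  have hterm_cont : ∀ n m : ℕ, Continuous (fun θ =>
      (starRingEnd ℂ (c n θ) * c m θ) * (inner ℂ (v n) (v m) : ℂ)) := fun n m =>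
    (((Complex.continuous_conj.comp (hccont n)).mul (hccont m)).mul continuous_const)
  have hEcont : Continuous E := by
    apply continuous_finset_sum; intro n _
    exact continuous_finset_sum _ fun m _ => hterm_cont n m
  have hpt : ∀ θ : ℝ, ‖∑ n ∈ range N, c n θ • v n‖^2 = (E θ).re := by
    intro θ
    rw [← inner_self_eq_norm_sq (𝕜 := ℂ), RCLike.re_to_complex]
    congr 1
    rw [sum_inner]
    refine Finset.sum_congr rfl fun n _ => ?_
    rw [inner_smul_left, inner_sum, Finset.mul_sum]
    refine Finset.sum_congr rfl fun m _ => ?_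
    rw [inner_smul_right]
    ring
  have hint : (∫ θ in (0:ℝ)..(2*π), E θ)
      = ∑ n ∈ range N, (((2*π : ℝ):ℂ) * ((r:ℂ)⁻¹^(n+n+2))) * (inner ℂ (v n) (v n) : ℂ) := by
    rw [hE]
    rw [integral_finset_sum (fun n _ => (continuous_finset_sum _
      (fun m _ => hterm_cont n m)).intervalIntegrable _ _)]
    have hin : ∀ n ∈ range N, (∫ θ in (0:ℝ)..(2*π), ∑ m ∈ range N,
        (starRingEnd ℂ (c n θ) * c m θ) * (inner ℂ (v n) (v m) : ℂ))
        = ∑ m ∈ range N, (if n = m then (((2*π:ℝ):ℂ) * ((r:ℂ)⁻¹^(n+m+2))) else 0)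
            * (inner ℂ (v n) (v m) : ℂ) := by
      intro n _
      rw [integral_finset_sum (fun m _ => (hterm_cont n m).intervalIntegrable _ _)]
      refine Finset.sum_congr rfl fun m _ => ?_
      rw [integral_mul_const]
      congr 1
      have hcoeff : ∀ θ : ℝ, starRingEnd ℂ (c n θ) * c m θ
          = ((r:ℂ)⁻¹) ^ (n+m+2) * Complex.exp (((((n:ℤ) - (m:ℤ)):ℤ):ℂ) * θ * Complex.I) :=
        fun θ => my_coeff r θ n m
      simp_rw [hcoeff]
      rw [integral_const_mul, my_int_exp]
      by_cases h : n = m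
      · have : ((n:ℤ) - (m:ℤ)) = 0 := by rw [h, sub_self]
        rw [if_pos this, if_pos h]
        push_cast
        ring
      · have : ((n:ℤ) - (m:ℤ)) ≠ 0 := by
          simpa [sub_eq_zero] using fun hh => h (by exact_mod_cast hh)
        rw [if_neg this, if_neg h, mul_zero]
    rw [Finset.sum_congr rfl hin]
    refine Finset.sum_congr rfl fun n hn => ?_
    simp only [ite_mul, zero_mul, Finset.sum_ite_eq, hn, if_true]
  calc (∫ θ in (0:ℝ)..(2*π), ‖∑ n ∈ range N, c n θ • v n‖ ^ 2)
      = ∫ θ in (0:ℝ)..(2*π), Complex.reCLM (E θ) := by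
        simp_rw [hpt]; rfl
    _ = Complex.reCLM (∫ θ in (0:ℝ)..(2*π), E θ) :=
        Complex.reCLM.intervalIntegral_comp_comm (hEcont.intervalIntegrable _ _)
    _ = 2*π * ∑ n ∈ range N, (r⁻¹ ^ (n+1))^2 * ‖v n‖^2 := by
        rw [hint, Complex.reCLM_apply, Complex.re_sum, Finset.mul_sum]
        refine Finset.sum_congr rfl fun n _ => ?_
        have h1 : (((2*π : ℝ):ℂ) * ((r:ℂ)⁻¹^(n+n+2))) * (inner ℂ (v n) (v n) : ℂ)
            = ((2*π*(r⁻¹^(n+n+2)) : ℝ) : ℂ) * (inner ℂ (v n) (v n) : ℂ) := by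
          push_cast; ring
        rw [h1, Complex.re_ofReal_mul]
        have h2 : (inner ℂ (v n) (v n) : ℂ).re = ‖v n‖^2 := by
          rw [← RCLike.re_to_complex, inner_self_eq_norm_sq]
        rw [h2]
        rw [show (r⁻¹^(n+1))^2 = r⁻¹^(n+n+2) by ring]
        ring

open Finset intervalIntegral in
theorem stmt5 {H : Type*} [NormedAddCommGroup H] [InnerProductSpace ℂ H]
    [CompleteSpace H] (C : ℝ) :
    ∃ C' : ℝ, ∀ (T : H →L[ℂ] H), (∀ n : ℕ, ‖T ^ n‖ ≤ C) →
      ∀ (r : ℝ), 1 < r → r < 2 → ∀ x : H,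
        (∫ θ in (0:ℝ)..(2*π),
            ‖Ring.inverse (T - circleMap 0 r θ • (1 : H →L[ℂ] H)) x‖ ^ 2 * r) ≤
          C' * ‖x‖ ^ 2 / (r - 1) := by
  refine ⟨2*π*C^2, fun T hT r hr1 _hr2 x => ?_⟩
  have hC : 0 ≤ C := le_trans (norm_nonneg _) (hT 0)
  have hr0 : (0:ℝ) < r := lt_trans one_pos hr1
  have hrne : r ≠ 0 := ne_of_gt hr0
  have hs0 : (0:ℝ) < r⁻¹ := inv_pos.mpr hr0
  have hs1 : r⁻¹ < 1 := inv_lt_one_of_one_lt₀ hr1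
  -- basic facts about circleMap
  have hlamne : ∀ θ : ℝ, circleMap 0 r θ ≠ 0 := fun θ => circleMap_ne_center hrne
  have hlamnorm : ∀ θ : ℝ, ‖circleMap 0 r θ‖ = r := by
    intro θ
    rw [norm_circleMap_zero, abs_of_pos hr0]
  -- summability of the Neumann series
  have hsum : ∀ θ : ℝ, Summable fun n : ℕ => ‖((circleMap 0 r θ)⁻¹ • T) ^ n‖ := by
    intro θ
    refine Summable.of_nonneg_of_le (fun n => norm_nonneg _) (fun n => ?_)
      (((summable_geometric_of_lt_one (le_of_lt hs0) hs1).mul_left C))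
    rw [smul_pow, norm_smul, norm_pow, norm_inv, hlamnorm]
    calc r⁻¹ ^ n * ‖T ^ n‖ ≤ r⁻¹ ^ n * C := by
          exact mul_le_mul_of_nonneg_left (hT n) (by positivity)
      _ = C * r⁻¹ ^ n := mul_comm _ _
  have hgsum : ∀ θ : ℝ, HasSum
      (fun n : ℕ => (-((circleMap 0 r θ)⁻¹ ^ (n+1))) • ((T ^ n) x))
      (Ring.inverse (T - circleMap 0 r θ • (1 : H →L[ℂ] H)) x) :=
    fun θ => my_hasSum_inverse_apply T (hlamne θ) (hsum θ) x
  -- partial sums and limit function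
  set F : ℕ → ℝ → ℝ := fun N θ =>
    ‖∑ n ∈ range N, (-((circleMap 0 r θ)⁻¹ ^ (n+1))) • ((T ^ n) x)‖^2 * r with hF
  set f : ℝ → ℝ := fun θ =>
    ‖Ring.inverse (T - circleMap 0 r θ • (1 : H →L[ℂ] H)) x‖^2 * r with hf
  have hFcont : ∀ N, Continuous (F N) := by
    intro N
    apply Continuous.mul _ continuous_const
    apply Continuous.pow
    apply Continuous.norm
    apply continuous_finset_sum
    intro n _
    exact ((((continuous_circleMap 0 r).inv₀ hlamne).pow _).neg).smul continuous_const
  have hFtend : ∀ θ : ℝ, Filter.Tendsto (fun N => F N θ) Filter.atTop (nhds (f θ)) := by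
    intro θ
    have h1 := (hgsum θ).tendsto_sum_nat
    exact ((h1.norm.pow 2).mul_const r)
  -- uniform bound
  set K : ℝ := (C*‖x‖/(r-1))^2 * r with hK
  have hsumle : ∀ N : ℕ, (∑ n ∈ range N, r⁻¹^(n+1)) ≤ (r-1)⁻¹ := by
    intro N
    have h := my_geom_sum_le r⁻¹ (le_of_lt hs0) hs1 N
    rw [my_inv_div r hr1] at h
    exact h
  have hFb : ∀ (N : ℕ) (θ : ℝ), ‖F N θ‖ ≤ K := by
    intro N θ
    have hnn : 0 ≤ F N θ := by positivity
    rw [Real.norm_of_nonneg hnn, hK]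
    have hbd : ‖∑ n ∈ range N, (-((circleMap 0 r θ)⁻¹ ^ (n+1))) • ((T ^ n) x)‖
        ≤ C*‖x‖/(r-1) := by
      calc ‖∑ n ∈ range N, (-((circleMap 0 r θ)⁻¹ ^ (n+1))) • ((T ^ n) x)‖
          ≤ ∑ n ∈ range N, ‖(-((circleMap 0 r θ)⁻¹ ^ (n+1))) • ((T ^ n) x)‖ :=
            norm_sum_le _ _
        _ ≤ ∑ n ∈ range N, r⁻¹^(n+1) * (C * ‖x‖) := by
            refine Finset.sum_le_sum fun n _ => ?_
            rw [norm_smul, norm_neg, norm_pow, norm_inv, hlamnorm]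
            refine mul_le_mul_of_nonneg_left ?_ (by positivity)
            calc ‖(T^n) x‖ ≤ ‖T^n‖ * ‖x‖ := (T^n).le_opNorm x
              _ ≤ C * ‖x‖ := mul_le_mul_of_nonneg_right (hT n) (norm_nonneg x)
        _ = (∑ n ∈ range N, r⁻¹^(n+1)) * (C * ‖x‖) := by rw [Finset.sum_mul]
        _ ≤ (r-1)⁻¹ * (C * ‖x‖) := by
            refine mul_le_mul_of_nonneg_right (hsumle N) (by positivity)
        _ = C*‖x‖/(r-1) := by ring
    have h2 : ‖∑ n ∈ range N, (-((circleMap 0 r θ)⁻¹ ^ (n+1))) • ((T ^ n) x)‖^2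
        ≤ (C*‖x‖/(r-1))^2 := by
      exact pow_le_pow_left₀ (norm_nonneg _) hbd 2
    exact mul_le_mul_of_nonneg_right h2 (le_of_lt hr0)
  -- dominated convergence
  have htend : Filter.Tendsto (fun N => ∫ θ in (0:ℝ)..(2*π), F N θ) Filter.atTop
      (nhds (∫ θ in (0:ℝ)..(2*π), f θ)) := by
    refine tendsto_integral_filter_of_dominated_convergence (fun _ => K)
      (Filter.Eventually.of_forall fun N =>
        ((hFcont N).aestronglyMeasurable).restrict)
      (Filter.Eventually.of_forall fun N =>
        MeasureTheory.ae_of_all _ fun θ _ => hFb N θ)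
      intervalIntegrable_const
      (MeasureTheory.ae_of_all _ fun θ _ => hFtend θ)
  -- bound each partial integral
  have hFN : ∀ N : ℕ, (∫ θ in (0:ℝ)..(2*π), F N θ) ≤ 2*π*C^2 * ‖x‖^2 / (r-1) := by
    intro N
    have heq : (∫ θ in (0:ℝ)..(2*π), F N θ)
        = (∫ θ in (0:ℝ)..(2*π),
            ‖∑ n ∈ range N, (-((circleMap 0 r θ)⁻¹ ^ (n+1))) • ((T ^ n) x)‖^2) * r := by
      rw [hF]
      exact integral_mul_const r _
    rw [heq, my_parseval r hr1 (fun n => (T^n) x) N]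
    -- now bound 2π * (∑ ...) * r
    have hsum2 : (∑ n ∈ range N, (r⁻¹ ^ (n+1))^2 * ‖(T^n) x‖^2)
        ≤ C^2 * ‖x‖^2 * (r^2-1)⁻¹ := by
      have hterm : ∀ n ∈ range N, (r⁻¹ ^ (n+1))^2 * ‖(T^n) x‖^2
          ≤ (C^2*‖x‖^2) * ((r⁻¹^2)^(n+1)) := by
        intro n _
        have h1 : ‖(T^n) x‖^2 ≤ (C*‖x‖)^2 := by
          refine pow_le_pow_left₀ (norm_nonneg _) ?_ 2
          calc ‖(T^n) x‖ ≤ ‖T^n‖ * ‖x‖ := (T^n).le_opNorm x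
            _ ≤ C * ‖x‖ := mul_le_mul_of_nonneg_right (hT n) (norm_nonneg x)
        calc (r⁻¹ ^ (n+1))^2 * ‖(T^n) x‖^2 ≤ (r⁻¹ ^ (n+1))^2 * (C*‖x‖)^2 :=
              mul_le_mul_of_nonneg_left h1 (by positivity)
          _ = (C^2*‖x‖^2) * ((r⁻¹^2)^(n+1)) := by ring
      have hgeo : (∑ n ∈ range N, (r⁻¹^2)^(n+1)) ≤ (r^2-1)⁻¹ := by
        have hr2 : 1 < r^2 := by nlinarith
        have h0 : (0:ℝ) ≤ (r^2)⁻¹ := by positivity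
        have h1 : (r^2)⁻¹ < 1 := inv_lt_one_of_one_lt₀ hr2
        have h := my_geom_sum_le ((r^2)⁻¹) h0 h1 N
        rw [my_inv_div (r^2) hr2] at h
        simpa [inv_pow] using h
      calc (∑ n ∈ range N, (r⁻¹ ^ (n+1))^2 * ‖(T^n) x‖^2)
          ≤ ∑ n ∈ range N, (C^2*‖x‖^2) * ((r⁻¹^2)^(n+1)) := Finset.sum_le_sum hterm
        _ = (C^2*‖x‖^2) * ∑ n ∈ range N, (r⁻¹^2)^(n+1) := by rw [Finset.mul_sum]
        _ ≤ (C^2*‖x‖^2) * (r^2-1)⁻¹ := by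
            exact mul_le_mul_of_nonneg_left hgeo (by positivity)
        _ = C^2 * ‖x‖^2 * (r^2-1)⁻¹ := by ring
    have hπ : (0:ℝ) < π := Real.pi_pos
    have hkey : r * (r^2-1)⁻¹ ≤ (r-1)⁻¹ := by
      have h1 : r^2 - 1 = (r-1)*(r+1) := by ring
      rw [h1, mul_inv]
      have h2 : (0:ℝ) < r - 1 := by linarith
      have h3 : (0:ℝ) < r + 1 := by linarith
      calc r * ((r-1)⁻¹ * (r+1)⁻¹) = (r * (r+1)⁻¹) * (r-1)⁻¹ := by ring
        _ ≤ 1 * (r-1)⁻¹ := by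
            refine mul_le_mul_of_nonneg_right ?_ (le_of_lt (inv_pos.mpr h2))
            rw [mul_inv_le_iff₀ h3, one_mul]
            linarith
        _ = (r-1)⁻¹ := one_mul _
    calc 2*π * (∑ n ∈ range N, (r⁻¹ ^ (n+1))^2 * ‖(T^n) x‖^2) * r
        ≤ 2*π * (C^2 * ‖x‖^2 * (r^2-1)⁻¹) * r := by
          refine mul_le_mul_of_nonneg_right ?_ (le_of_lt hr0)
          exact mul_le_mul_of_nonneg_left hsum2 (by positivity)
      _ = (2*π*C^2*‖x‖^2) * (r * (r^2-1)⁻¹) := by ring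
      _ ≤ (2*π*C^2*‖x‖^2) * (r-1)⁻¹ := by
          exact mul_le_mul_of_nonneg_left hkey (by positivity)
      _ = 2*π*C^2 * ‖x‖^2 / (r-1) := by ring
  exact le_of_tendsto htend (Filter.Eventually.of_forall hFN)
end

section
/- Let f : U → ℂ be defined on an open set U ⊆ ℂ, let K ⊂ U be compact, and suppose f is injective on K and locally bi-Lipschitz: every point x ∈ K has a ball B(x, r(x)) ⊆ U on which f is bi-Lipschitz. Then f is bi-Lipschitz on some open neighborhood of K; that is, there exist an open set W with K ⊆ W ⊆ U and constants 0 < c ≤ C with c|z-w| ≤ |f(z)-f(w)| ≤ C|z-w| for all z, w ∈ W. -/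
theorem stmt8 (f : ℂ → ℂ) (U : Set ℂ) (hU : IsOpen U) (K : Set ℂ)
    (hK : IsCompact K) (hKU : K ⊆ U) (hinj : Set.InjOn f K)
    (hloc : ∀ x ∈ K, ∃ r > (0:ℝ), Metric.ball x r ⊆ U ∧
      ∃ c C : ℝ, 0 < c ∧ c ≤ C ∧
        ∀ z ∈ Metric.ball x r, ∀ w ∈ Metric.ball x r,
          c * ‖z - w‖ ≤ ‖f z - f w‖ ∧
          ‖f z - f w‖ ≤ C * ‖z - w‖) :
    ∃ W : Set ℂ, IsOpen W ∧ K ⊆ W ∧ W ⊆ U ∧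
      ∃ c C : ℝ, 0 < c ∧ c ≤ C ∧
        ∀ z ∈ W, ∀ w ∈ W,
          c * ‖z - w‖ ≤ ‖f z - f w‖ ∧
          ‖f z - f w‖ ≤ C * ‖z - w‖ := by
  rcases K.eq_empty_or_nonempty with hKe | ⟨k0, hk0⟩
  · exact ⟨∅, isOpen_empty, by simp [hKe], Set.empty_subset U, 1, 1, one_pos, le_refl 1, by simp⟩
  -- extract total choice functions
  have hloc' : ∀ x : ℂ, ∃ r c C : ℝ, x ∈ K →
      0 < r ∧ Metric.ball x r ⊆ U ∧ 0 < c ∧ c ≤ C ∧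
        ∀ z ∈ Metric.ball x r, ∀ w ∈ Metric.ball x r,
          c * ‖z - w‖ ≤ ‖f z - f w‖ ∧
          ‖f z - f w‖ ≤ C * ‖z - w‖ := by
    intro x
    by_cases hxK : x ∈ K
    · obtain ⟨r, hr, hrU, c, C, hc, hcC, hest⟩ := hloc x hxK
      exact ⟨r, c, C, fun _ => ⟨hr, hrU, hc, hcC, hest⟩⟩
    · exact ⟨1, 1, 1, fun h => absurd h hxK⟩
  choose r c C hP using hloc'
  -- finite subcover by quarter balls
  have hcov : K ⊆ ⋃ x : K, Metric.ball (x : ℂ) (r x / 4) := fun z hz =>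
    Set.mem_iUnion.2 ⟨⟨z, hz⟩, Metric.mem_ball_self (by linarith [(hP z hz).1])⟩
  obtain ⟨t, ht⟩ := hK.elim_finite_subcover (fun x : K => Metric.ball (x : ℂ) (r x / 4))
    (fun _ => Metric.isOpen_ball) hcov
  have htne : t.Nonempty := by
    obtain ⟨i, hi⟩ := Set.mem_iUnion₂.1 (ht hk0)
    exact ⟨i, hi.1⟩
  set ρ := t.inf' htne (fun i => r (i : ℂ)) with hρdef
  set c₀ := t.inf' htne (fun i => c (i : ℂ)) with hc₀def
  set C₀ := t.sup' htne (fun i => C (i : ℂ)) with hC₀def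
  have hρpos : 0 < ρ := (Finset.lt_inf'_iff htne).2 fun i hi => (hP i i.2).1
  have hρle : ∀ i ∈ t, ρ ≤ r (i : ℂ) := fun i hi => Finset.inf'_le _ hi
  have hc₀pos : 0 < c₀ := (Finset.lt_inf'_iff htne).2 fun i hi => (hP i i.2).2.2.1
  have hc₀le : ∀ i ∈ t, c₀ ≤ c (i : ℂ) := fun i hi => Finset.inf'_le _ hi
  have hC₀ge : ∀ i ∈ t, C (i : ℂ) ≤ C₀ := fun i hi => Finset.le_sup' (fun i : K => C (i : ℂ)) hi
  have hc₀C₀ : c₀ ≤ C₀ := by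
    obtain ⟨j, hj⟩ := htne
    exact le_trans (hc₀le j hj) (le_trans (hP j j.2).2.2.2.1 (hC₀ge j hj))
  have hC₀pos : 0 < C₀ := lt_of_lt_of_le hc₀pos hc₀C₀
  -- continuity of f on K
  have hcontAt : ∀ z ∈ K, ContinuousAt f z := by
    intro z hz
    obtain ⟨i, hi, hzi⟩ := Set.mem_iUnion₂.1 (ht hz)
    have hri : 0 < r (i : ℂ) := (hP i i.2).1
    have hlip : LipschitzOnWith (Real.toNNReal (C (i : ℂ))) f (Metric.ball (i : ℂ) (r (i : ℂ))) := by
      apply LipschitzOnWith.of_dist_le_mul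
      intro a ha b hb
      rw [Complex.dist_eq, Complex.dist_eq,
        Real.coe_toNNReal _ (le_trans (le_of_lt (hP i i.2).2.2.1) (hP i i.2).2.2.2.1)]
      exact ((hP i i.2).2.2.2.2 a ha b hb).2
    have hzball : z ∈ Metric.ball (i : ℂ) (r (i : ℂ)) :=
      Metric.ball_subset_ball (by linarith) hzi
    exact hlip.continuousOn.continuousAt (Metric.isOpen_ball.mem_nhds hzball)
  have hcont : ContinuousOn f K := fun z hz => (hcontAt z hz).continuousWithinAt
  have habs : ContinuousOn (fun p : ℂ × ℂ => ‖f p.1 - f p.2‖) (K ×ˢ K) := by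
    apply continuous_norm.comp_continuousOn
    exact (hcont.comp continuousOn_fst fun p hp => hp.1).sub
      (hcont.comp continuousOn_snd fun p hp => hp.2)
  -- maximum M of |f x - f y| on K × K
  obtain ⟨pM, hpM, hMmax'⟩ := (hK.prod hK).exists_isMaxOn ⟨(k0, k0), ⟨hk0, hk0⟩⟩ habs
  have hMmax := isMaxOn_iff.1 hMmax'
  set M := ‖f pM.1 - f pM.2‖ with hMdef
  have hM0 : 0 ≤ M := norm_nonneg _
  -- positive lower bound δ for far pairs in K
  have hδ : ∃ δ > 0, ∀ x ∈ K, ∀ y ∈ K, ρ / 4 ≤ dist x y → δ ≤ ‖f x - f y‖ := by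
    set S := (K ×ˢ K) ∩ {p : ℂ × ℂ | ρ / 4 ≤ dist p.1 p.2} with hSdef
    have hScomp : IsCompact S :=
      (hK.prod hK).inter_right (isClosed_le continuous_const continuous_dist)
    rcases S.eq_empty_or_nonempty with hSe | hSne
    · refine ⟨1, one_pos, fun x hxK y hyK hd => ?_⟩
      have hmem : (x, y) ∈ S := ⟨⟨hxK, hyK⟩, hd⟩
      rw [hSe] at hmem
      exact absurd hmem (Set.notMem_empty _)
    · obtain ⟨p0, hp0, hmin'⟩ := hScomp.exists_isMinOn hSne (habs.mono Set.inter_subset_left)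
      have hmin := isMinOn_iff.1 hmin'
      refine ⟨‖f p0.1 - f p0.2‖, ?_,
        fun x hxK y hyK hd => hmin (x, y) ⟨⟨hxK, hyK⟩, hd⟩⟩
      have hne : p0.1 ≠ p0.2 := by
        intro h
        have := hp0.2
        simp only [Set.mem_setOf_eq, h, dist_self] at this
        linarith
      have hfne : f p0.1 ≠ f p0.2 := fun h => hne (hinj hp0.1.1 hp0.1.2 h)
      exact norm_pos_iff.2 (sub_ne_zero.2 hfne)
  obtain ⟨δ, hδpos, hδ⟩ := hδ
  -- choice of η
  set η := min (ρ / 8) (δ / (4 * C₀)) with hηdef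
  have hηpos : 0 < η := lt_min (by linarith) (div_pos hδpos (by linarith))
  have hηρ : η ≤ ρ / 8 := min_le_left _ _
  have hηδ : C₀ * η ≤ δ / 4 := by
    have h1 : η ≤ δ / (4 * C₀) := min_le_right _ _
    calc C₀ * η ≤ C₀ * (δ / (4 * C₀)) := by
          exact mul_le_mul_of_nonneg_left h1 (le_of_lt hC₀pos)
      _ = δ / 4 := by field_simp
  set D := Metric.diam K + 2 * η with hDdef
  have hDpos : 0 < D := by
    have := Metric.diam_nonneg (s := K)
    linarith
  set cc := min c₀ (δ / 2 / D) with hccdef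
  set CC := max C₀ ((2 * C₀ * η + M) / (ρ / 2)) with hCCdef
  have hccpos : 0 < cc := lt_min hc₀pos (div_pos (by linarith) hDpos)
  have hccCC : cc ≤ CC := le_trans (min_le_left _ _) (le_trans hc₀C₀ (le_max_left _ _))
  -- the neighborhood W
  -- a point of W is η-close to some k ∈ K which lies in a quarter ball
  have hWnear : ∀ z ∈ ⋃ k ∈ K, Metric.ball k η, ∃ k ∈ K, ∃ i ∈ t,
      dist z k < η ∧ k ∈ Metric.ball (i : ℂ) (r (i : ℂ) / 4) := by
    intro z hz
    obtain ⟨k, hkK, hzk⟩ := Set.mem_iUnion₂.1 hz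
    obtain ⟨i, hit, hki⟩ := Set.mem_iUnion₂.1 (ht hkK)
    exact ⟨k, hkK, i, hit, Metric.mem_ball.1 hzk, hki⟩
  refine ⟨⋃ k ∈ K, Metric.ball k η, isOpen_biUnion fun k _ => Metric.isOpen_ball,
    fun k hk => Set.mem_biUnion hk (Metric.mem_ball_self hηpos), ?_, cc, CC, hccpos, hccCC, ?_⟩
  · -- W ⊆ U
    intro z hz
    obtain ⟨k, hkK, i, hit, hzk, hki⟩ := hWnear z hz
    have hri : ρ ≤ r (i : ℂ) := hρle i hit
    have hzi : z ∈ Metric.ball (i : ℂ) (r (i : ℂ)) := by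
      rw [Metric.mem_ball]
      calc dist z (i : ℂ) ≤ dist z k + dist k (i : ℂ) := dist_triangle _ _ _
        _ < η + r (i : ℂ) / 4 := by have := Metric.mem_ball.1 hki; linarith
        _ ≤ r (i : ℂ) := by linarith
    exact (hP i i.2).2.1 hzi
  · -- the bi-Lipschitz estimate
    intro z hz w hw
    obtain ⟨kz, hkzK, i, hit, hzkz, hkzi⟩ := hWnear z hz
    obtain ⟨kw, hkwK, j, hjt, hwkw, hkwj⟩ := hWnear w hw
    have hri : ρ ≤ r (i : ℂ) := hρle i hit
    have hrj : ρ ≤ r (j : ℂ) := hρle j hjt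
    have hkzi' := Metric.mem_ball.1 hkzi
    have hkwj' := Metric.mem_ball.1 hkwj
    have hzi : z ∈ Metric.ball (i : ℂ) (r (i : ℂ)) := by
      rw [Metric.mem_ball]
      calc dist z (i : ℂ) ≤ dist z kz + dist kz (i : ℂ) := dist_triangle _ _ _
        _ < η + r (i : ℂ) / 4 := by linarith
        _ ≤ r (i : ℂ) := by linarith
    have hwj : w ∈ Metric.ball (j : ℂ) (r (j : ℂ)) := by
      rw [Metric.mem_ball]
      calc dist w (j : ℂ) ≤ dist w kw + dist kw (j : ℂ) := dist_triangle _ _ _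
        _ < η + r (j : ℂ) / 4 := by linarith
        _ ≤ r (j : ℂ) := by linarith
    have habsd : ‖z - w‖ = dist z w := (Complex.dist_eq z w).symm
    by_cases hnear : dist z w < ρ / 2
    · -- near case: both in ball i (r i)
      have hwi : w ∈ Metric.ball (i : ℂ) (r (i : ℂ)) := by
        rw [Metric.mem_ball]
        calc dist w (i : ℂ) ≤ dist w z + dist z (i : ℂ) := dist_triangle _ _ _
          _ ≤ dist w z + (dist z kz + dist kz (i : ℂ)) := by
              linarith [dist_triangle z kz (i : ℂ)]
          _ < ρ / 2 + (η + r (i : ℂ) / 4) := by rw [dist_comm w z]; linarith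
          _ ≤ r (i : ℂ) := by linarith
      obtain ⟨hlow, hup⟩ := (hP i i.2).2.2.2.2 z hzi w hwi
      constructor
      · refine le_trans ?_ hlow
        exact mul_le_mul_of_nonneg_right (le_trans (min_le_left _ _) (hc₀le i hit))
          (norm_nonneg _)
      · refine le_trans hup ?_
        exact mul_le_mul_of_nonneg_right (le_trans (hC₀ge i hit) (le_max_left _ _))
          (norm_nonneg _)
    · -- far case
      push_neg at hnear
      have hkzball : kz ∈ Metric.ball (i : ℂ) (r (i : ℂ)) :=
        Metric.ball_subset_ball (by linarith) hkzi
      have hkwball : kw ∈ Metric.ball (j : ℂ) (r (j : ℂ)) :=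
        Metric.ball_subset_ball (by linarith) hkwj
      -- |f z - f kz| ≤ C₀ η
      have hfz : ‖f z - f kz‖ ≤ C₀ * η := by
        have h1 := ((hP i i.2).2.2.2.2 z hzi kz hkzball).2
        have h2 : ‖z - kz‖ ≤ η := by rw [← Complex.dist_eq]; linarith
        have hCi0 : 0 ≤ C (i : ℂ) :=
          le_trans (le_of_lt (hP i i.2).2.2.1) (hP i i.2).2.2.2.1
        calc ‖f z - f kz‖ ≤ C (i : ℂ) * ‖z - kz‖ := h1
          _ ≤ C (i : ℂ) * η := mul_le_mul_of_nonneg_left h2 hCi0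
          _ ≤ C₀ * η := mul_le_mul_of_nonneg_right (hC₀ge i hit) (le_of_lt hηpos)
      have hfw : ‖f w - f kw‖ ≤ C₀ * η := by
        have h1 := ((hP j j.2).2.2.2.2 w hwj kw hkwball).2
        have h2 : ‖w - kw‖ ≤ η := by rw [← Complex.dist_eq]; linarith
        have hCj0 : 0 ≤ C (j : ℂ) :=
          le_trans (le_of_lt (hP j j.2).2.2.1) (hP j j.2).2.2.2.1
        calc ‖f w - f kw‖ ≤ C (j : ℂ) * ‖w - kw‖ := h1
          _ ≤ C (j : ℂ) * η := mul_le_mul_of_nonneg_left h2 hCj0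
          _ ≤ C₀ * η := mul_le_mul_of_nonneg_right (hC₀ge j hjt) (le_of_lt hηpos)
      -- kz, kw are far apart
      have hkfar : ρ / 4 ≤ dist kz kw := by
        have h4 := dist_triangle4 z kz kw w
        have h5 : dist kw w = dist w kw := dist_comm _ _
        have h6 : dist z kz ≤ η := le_of_lt hzkz
        linarith [le_of_lt hwkw]
      have hδk : δ ≤ ‖f kz - f kw‖ := hδ kz hkzK kw hkwK hkfar
      -- lower bound
      have hlow : δ / 2 ≤ ‖f z - f w‖ := by
        have h4 : dist (f kz) (f kw) ≤ dist (f kz) (f z) + dist (f z) (f w) + dist (f w) (f kw) :=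
          dist_triangle4 _ _ _ _
        rw [Complex.dist_eq, Complex.dist_eq, Complex.dist_eq, Complex.dist_eq] at h4
        have e1 : ‖f kz - f z‖ = ‖f z - f kz‖ := by
          rw [← neg_sub, norm_neg]
        rw [e1] at h4
        linarith
      have hdzw : dist z w ≤ D := by
        have h4 := dist_triangle4 z kz kw w
        have h5 : dist kz kw ≤ Metric.diam K := Metric.dist_le_diam_of_mem hK.isBounded hkzK hkwK
        have h6 : dist kw w = dist w kw := dist_comm _ _
        have h7 : dist z kz ≤ η := le_of_lt hzkz
        rw [hDdef]; linarith [le_of_lt hwkw]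
      constructor
      · -- cc * |z - w| ≤ |f z - f w|
        rw [habsd]
        calc cc * dist z w ≤ (δ / 2 / D) * dist z w :=
              mul_le_mul_of_nonneg_right (min_le_right _ _) dist_nonneg
          _ ≤ (δ / 2 / D) * D := by
              apply mul_le_mul_of_nonneg_left hdzw
              exact le_of_lt (div_pos (by linarith) hDpos)
          _ = δ / 2 := div_mul_cancel₀ _ (ne_of_gt hDpos)
          _ ≤ _ := hlow
      · -- |f z - f w| ≤ CC * |z - w|
        rw [habsd]
        have hfar : ‖f z - f w‖ ≤ 2 * C₀ * η + M := by
          have h4 : dist (f z) (f w) ≤ dist (f z) (f kz) + dist (f kz) (f kw) + dist (f kw) (f w) :=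
            dist_triangle4 _ _ _ _
          rw [Complex.dist_eq, Complex.dist_eq, Complex.dist_eq, Complex.dist_eq] at h4
          have e1 : ‖f kw - f w‖ = ‖f w - f kw‖ := by
            rw [← neg_sub, norm_neg]
          rw [e1] at h4
          have hMk : ‖f kz - f kw‖ ≤ M := hMmax (kz, kw) ⟨hkzK, hkwK⟩
          linarith
        have hq0 : 0 ≤ 2 * C₀ * η + M := by positivity
        calc ‖f z - f w‖ ≤ 2 * C₀ * η + M := hfar
          _ = ((2 * C₀ * η + M) / (ρ / 2)) * (ρ / 2) := by
              rw [div_mul_cancel₀]; linarith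
          _ ≤ ((2 * C₀ * η + M) / (ρ / 2)) * dist z w := by
              apply mul_le_mul_of_nonneg_left hnear
              exact div_nonneg hq0 (by linarith)
          _ ≤ CC * dist z w :=
              mul_le_mul_of_nonneg_right (le_max_right _ _) dist_nonneg
end
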